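/- For |q| < 1: Σ_{n ≥ 0} q^{n^2} / (q^2;q^2)_n = (q^2;q^4)_∞^2 (q^4;q^4)_∞ / (q;q)_∞. -/

import Mathlib

set_option maxHeartbeats 1000000

open Filter Finset Topology

/-- Finite q-Pochhammer symbol `(x;q)_n = ∏_{k=0}^{n-1} (1 - x q^k)`. -/
noncomputable def qPoch (x q : ℂ) (n : ℕ) : ℂ := ∏ k ∈ Finset.range n, (1 - x * q ^ k)

/-- Infinite q-Pochhammer symbol `(x;q)_∞ = ∏_{k≥0} (1 - x q^k)`. -/
noncomputable def qPochInf (x q : ℂ) : ℂ := ∏' k : ℕ, (1 - x * q ^ k)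

lemma fac_ne {x Q : ℂ} (hx : ‖x‖ < 1) (hQ : ‖Q‖ ≤ 1) (k : ℕ) : 1 + x * Q ^ k ≠ 0 := by
  intro h
  have h1 : x * Q ^ k = -1 := by linear_combination h
  have h2 : ‖x * Q ^ k‖ = 1 := by rw [h1]; simp
  have h3 : ‖x * Q ^ k‖ ≤ ‖x‖ := by
    rw [norm_mul, norm_pow]
    calc ‖x‖ * ‖Q‖ ^ k ≤ ‖x‖ * 1 := by
          gcongr
          exact pow_le_one₀ (norm_nonneg _) hQ
      _ = ‖x‖ := mul_one _
  linarith

lemma log_summable {x Q : ℂ} (hQ : ‖Q‖ < 1) :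
    Summable fun k : ℕ => Complex.log (1 + x * Q ^ k) := by
  apply Summable.of_norm_bounded_eventually_nat (g := fun k => 3 / 2 * (‖x‖ * ‖Q‖ ^ k))
  · simpa [mul_assoc] using ((summable_geometric_of_lt_one (norm_nonneg Q) hQ).mul_left (3/2*‖x‖))
  · have h0 : Tendsto (fun k : ℕ => ‖x‖ * ‖Q‖ ^ k) atTop (𝓝 0) := by
      simpa using (tendsto_pow_atTop_nhds_zero_of_lt_one (norm_nonneg Q) hQ).const_mul ‖x‖
    filter_upwards [h0.eventually_le_const (show (0:ℝ) < 1/2 by norm_num)] with k hk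
    have : ‖x * Q ^ k‖ ≤ 1 / 2 := by rwa [norm_mul, norm_pow]
    simpa [norm_mul, norm_pow] using Complex.norm_log_one_add_half_le_self this

lemma key {x Q : ℂ} (hx : ‖x‖ < 1) (hQ : ‖Q‖ < 1) :
    HasProd (fun k : ℕ => 1 + x * Q ^ k) (∏' k : ℕ, (1 + x * Q ^ k)) ∧
      (∏' k : ℕ, (1 + x * Q ^ k)) ≠ 0 := by
  have hne : ∀ (_ : Unit) (k : ℕ), (fun (k : ℕ) (_ : Unit) => 1 + x * Q ^ k) k () ≠ 0 :=
    fun _ k => fac_ne hx hQ.le k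
  have hs : ∀ _ : Unit, Summable fun k : ℕ => Complex.log (1 + x * Q ^ k) :=
    fun _ => log_summable hQ
  constructor
  · exact (Complex.multipliable_of_summable_log (f := fun k : ℕ => 1 + x * Q ^ k)
      (log_summable hQ)).hasProd
  · have := Complex.cexp_tsum_eq_tprod (f := fun k : ℕ => 1 + x * Q ^ k)
      (fun k => fac_ne hx hQ.le k) (log_summable hQ)
    beta_reduce at this
    rw [← this]
    exact Complex.exp_ne_zero _

lemma key' {x Q : ℂ} (hx : ‖x‖ < 1) (hQ : ‖Q‖ < 1) :
    HasProd (fun k : ℕ => 1 - x * Q ^ k) (qPochInf x Q) ∧ qPochInf x Q ≠ 0 := by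
  have := key (x := -x) (Q := Q) (by simpa using hx) hQ
  simpa [qPochInf, sub_eq_add_neg, neg_mul] using this

lemma split {x Q : ℂ} (hx : ‖x‖ < 1) (hQ : ‖Q‖ < 1) :
    qPochInf x Q = qPochInf x (Q ^ 2) * qPochInf (x * Q) (Q ^ 2) := by
  have hQ2 : ‖Q ^ 2‖ < 1 := by
    rw [norm_pow]; exact pow_lt_one₀ (norm_nonneg _) hQ (by norm_num)
  have hxQ : ‖x * Q‖ < 1 := by
    rw [norm_mul]
    calc ‖x‖ * ‖Q‖ ≤ ‖x‖ * 1 := mul_le_mul_of_nonneg_left hQ.le (norm_nonneg x)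
      _ = ‖x‖ := mul_one _
      _ < 1 := hx
  have he := (key' hx hQ2).1
  have ho := (key' hxQ hQ2).1
  have he' : Multipliable fun k : ℕ => (1 - x * Q ^ (2 * k)) := by
    refine he.multipliable.congr fun k => ?_
    rw [pow_mul]
  have ho' : Multipliable fun k : ℕ => (1 - x * Q ^ (2 * k + 1)) := by
    refine ho.multipliable.congr fun k => ?_
    simp only [pow_add, pow_mul, pow_one]
    ring_nf
  have := tprod_even_mul_odd (f := fun k : ℕ => 1 - x * Q ^ k) he' ho'
  rw [qPochInf, ← this]
  congr 1
  · rw [qPochInf]; exact tprod_congr fun k => by simp only [pow_mul]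
  · rw [qPochInf]
    refine tprod_congr fun k => ?_
    simp only [pow_add, pow_mul, pow_one]
    ring_nf

lemma merge {q : ℂ} (hq : ‖q‖ < 1) :
    (∏' k : ℕ, (1 + q * (q ^ 2) ^ k)) * qPochInf q (q ^ 2)
      = qPochInf (q ^ 2) (q ^ 4) := by
  have hq2 : ‖q ^ 2‖ < 1 := by
    rw [norm_pow]; exact pow_lt_one₀ (norm_nonneg _) hq (by norm_num)
  have hm1 := (key (x := q) (Q := q ^ 2) hq hq2).1.multipliable
  have hm2 := (key' (x := q) (Q := q ^ 2) hq hq2).1.multipliable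
  rw [qPochInf, ← Multipliable.tprod_mul hm1 hm2, qPochInf]
  refine tprod_congr fun k => ?_
  simp only [← pow_mul]
  ring

lemma prod_side {q : ℂ} (hq : ‖q‖ < 1) :
    (∏' k : ℕ, (1 + q * (q ^ 2) ^ k)) * qPochInf q q
      = qPochInf (q ^ 2) (q ^ 4) ^ 2 * qPochInf (q ^ 4) (q ^ 4) := by
  have hq2 : ‖q ^ 2‖ < 1 := by
    rw [norm_pow]; exact pow_lt_one₀ (norm_nonneg _) hq (by norm_num)
  have h1 := split hq hq
  have h2 := split hq2 hq2
  have e1 : q * q = q ^ 2 := by ring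
  have e2 : (q ^ 2) ^ 2 = q ^ 4 := by ring
  have e3 : q ^ 2 * q ^ 2 = q ^ 4 := by ring
  rw [e1] at h1
  rw [e2, e3] at h2
  rw [h1, h2, ← mul_assoc, merge hq]
  ring

lemma qPoch_ne_zero {Q : ℂ} (hQ : ‖Q‖ < 1) (n : ℕ) : qPoch Q Q n ≠ 0 := by
  rw [qPoch]
  refine Finset.prod_ne_zero_iff.mpr fun k _ => ?_
  have := fac_ne (x := -Q) (Q := Q) (by simpa using hQ) hQ.le k
  intro h
  apply this
  rw [← h]; ring

lemma norm_one_sub_factor {Q : ℂ} (hQ : ‖Q‖ < 1) (k : ℕ) :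
    1 - ‖Q‖ ≤ ‖1 - Q * Q ^ k‖ := by
  have h1 : ‖Q * Q ^ k‖ ≤ ‖Q‖ := by
    rw [norm_mul, norm_pow]
    calc ‖Q‖ * ‖Q‖ ^ k ≤ ‖Q‖ * 1 :=
          mul_le_mul_of_nonneg_left (pow_le_one₀ (norm_nonneg _) hQ.le) (norm_nonneg _)
      _ = ‖Q‖ := mul_one _
  calc 1 - ‖Q‖ ≤ 1 - ‖Q * Q ^ k‖ := by linarith
    _ ≤ ‖1 - Q * Q ^ k‖ := by
        have := norm_sub_norm_le (1 : ℂ) (Q * Q ^ k)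
        simpa using this

lemma norm_qPoch_ge {Q : ℂ} (hQ : ‖Q‖ < 1) (n : ℕ) :
    (1 - ‖Q‖) ^ n ≤ ‖qPoch Q Q n‖ := by
  rw [qPoch, norm_prod]
  calc (1 - ‖Q‖) ^ n = ∏ k ∈ Finset.range n, (1 - ‖Q‖) := by
        rw [Finset.prod_const, Finset.card_range]
    _ ≤ ∏ k ∈ Finset.range n, ‖1 - Q * Q ^ k‖ :=
        Finset.prod_le_prod (fun k _ => by linarith [hQ, norm_nonneg Q])
          (fun k _ => norm_one_sub_factor hQ k)

noncomputable def eulA (Q : ℂ) (n : ℕ) : ℂ := Q ^ (n.choose 2) / qPoch Q Q n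

lemma eulA_zero (Q : ℂ) : eulA Q 0 = 1 := by simp [eulA, qPoch]

lemma eulA_rec {Q : ℂ} (hQ : ‖Q‖ < 1) (n : ℕ) :
    eulA Q (n + 1) * (1 - Q * Q ^ n) = Q ^ n * eulA Q n := by
  have hP := qPoch_ne_zero hQ n
  have hP1 := qPoch_ne_zero hQ (n + 1)
  have hs : qPoch Q Q (n + 1) = qPoch Q Q n * (1 - Q * Q ^ n) := Finset.prod_range_succ _ _
  have hf : (1 : ℂ) - Q * Q ^ n ≠ 0 := by
    intro h; apply hP1; rw [hs, h, mul_zero]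
  have hc : (n + 1).choose 2 = n.choose 2 + n := by
    rw [Nat.choose_succ_succ]
    simp [Nat.choose_one_right, Nat.add_comm]
  rw [eulA, eulA, hs, hc, pow_add]
  rw [← div_div, div_mul_cancel₀ _ hf]
  ring

lemma summable_norm_eulA {Q : ℂ} (hQ : ‖Q‖ < 1) (x : ℂ) :
    Summable (fun n : ℕ => ‖eulA Q n‖ * ‖x‖ ^ n) := by
  have h1Q : (0:ℝ) < 1 - ‖Q‖ := by linarith
  apply summable_of_ratio_norm_eventually_le (r := 1/2) (by norm_num)
  have h0 : Filter.Tendsto (fun n : ℕ => ‖Q‖ ^ n * ‖x‖ / (1 - ‖Q‖)) atTop (𝓝 0) := by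
    have := (tendsto_pow_atTop_nhds_zero_of_lt_one (norm_nonneg Q) hQ)
    simpa using (this.mul_const ‖x‖).div_const (1 - ‖Q‖)
  filter_upwards [h0.eventually_le_const (show (0:ℝ) < 1/2 by norm_num)] with n hn
  have hrec := eulA_rec hQ n
  have hb : ‖eulA Q (n+1)‖ * (1 - ‖Q‖) ≤ ‖Q‖ ^ n * ‖eulA Q n‖ := by
    calc ‖eulA Q (n+1)‖ * (1 - ‖Q‖)
        ≤ ‖eulA Q (n+1)‖ * ‖1 - Q * Q ^ n‖ :=
          mul_le_mul_of_nonneg_left (norm_one_sub_factor hQ n) (norm_nonneg _)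
      _ = ‖Q ^ n * eulA Q n‖ := by rw [← norm_mul, hrec]
      _ = ‖Q‖ ^ n * ‖eulA Q n‖ := by rw [norm_mul, norm_pow]
  have hkey : ‖eulA Q (n+1)‖ ≤ ‖Q‖ ^ n * ‖eulA Q n‖ / (1 - ‖Q‖) :=
    (le_div_iff₀ h1Q).mpr hb
  rw [Real.norm_of_nonneg (by positivity), Real.norm_of_nonneg (by positivity)]
  calc ‖eulA Q (n+1)‖ * ‖x‖ ^ (n+1)
      ≤ (‖Q‖ ^ n * ‖eulA Q n‖ / (1 - ‖Q‖)) * ‖x‖ ^ (n+1) :=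
        mul_le_mul_of_nonneg_right hkey (by positivity)
    _ = (‖Q‖ ^ n * ‖x‖ / (1 - ‖Q‖)) * (‖eulA Q n‖ * ‖x‖ ^ n) := by ring
    _ ≤ 1/2 * (‖eulA Q n‖ * ‖x‖ ^ n) := mul_le_mul_of_nonneg_right hn (by positivity)

lemma summable_eulA {Q : ℂ} (hQ : ‖Q‖ < 1) (x : ℂ) :
    Summable (fun n : ℕ => eulA Q n * x ^ n) := by
  apply Summable.of_norm
  refine (summable_norm_eulA hQ x).congr fun n => ?_
  rw [norm_mul, norm_pow]

lemma eulA_rec' {Q : ℂ} (hQ : ‖Q‖ < 1) (x : ℂ) (n : ℕ) :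
    eulA Q (n+1) * x ^ (n+1)
      = Q ^ n * eulA Q n * x ^ (n+1) + eulA Q (n+1) * (Q * x) ^ (n+1) := by
  have h := eulA_rec hQ n
  have : eulA Q (n+1) = Q ^ n * eulA Q n + Q ^ (n+1) * eulA Q (n+1) := by
    linear_combination h
  calc eulA Q (n+1) * x ^ (n+1)
      = (Q ^ n * eulA Q n + Q ^ (n+1) * eulA Q (n+1)) * x ^ (n+1) := by rw [← this]
    _ = Q ^ n * eulA Q n * x ^ (n+1) + eulA Q (n+1) * (Q * x) ^ (n+1) := by
        rw [mul_pow]; ring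

lemma S_func {Q : ℂ} (hQ : ‖Q‖ < 1) (x : ℂ) :
    ∑' n : ℕ, eulA Q n * x ^ n = (1 + x) * ∑' n : ℕ, eulA Q n * (Q * x) ^ n := by
  have hs := summable_eulA hQ x
  have hsQ := summable_eulA hQ (Q * x)
  have hs1 : Summable (fun n : ℕ => eulA Q (n+1) * (Q*x) ^ (n+1)) :=
    (summable_nat_add_iff 1).2 hsQ
  have hs2 : Summable (fun n : ℕ => Q ^ n * eulA Q n * x ^ (n+1)) := by
    refine (hsQ.mul_right x).congr fun n => ?_
    rw [mul_pow]; ring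
  have e0 : eulA Q 0 * x ^ 0 = 1 := by rw [eulA_zero]; simp
  have e0Q : eulA Q 0 * (Q*x) ^ 0 = 1 := by rw [eulA_zero]; simp
  rw [Summable.tsum_eq_zero_add hs, e0]
  have step : ∑' n : ℕ, eulA Q (n+1) * x ^ (n+1)
      = (∑' n : ℕ, Q ^ n * eulA Q n * x ^ (n+1))
        + ∑' n : ℕ, eulA Q (n+1) * (Q*x) ^ (n+1) := by
    rw [← Summable.tsum_add hs2 hs1]
    exact tsum_congr fun n => eulA_rec' hQ x n
  rw [step]
  have t1 : ∑' n : ℕ, Q ^ n * eulA Q n * x ^ (n+1)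
      = (∑' n : ℕ, eulA Q n * (Q*x) ^ n) * x := by
    rw [← tsum_mul_right]
    exact tsum_congr fun n => by rw [mul_pow]; ring
  have t2 : ∑' n : ℕ, eulA Q (n+1) * (Q*x) ^ (n+1)
      = (∑' n : ℕ, eulA Q n * (Q*x) ^ n) - 1 := by
    rw [Summable.tsum_eq_zero_add hsQ, e0Q]; ring
  rw [t1, t2]; ring

lemma S_iter {Q : ℂ} (hQ : ‖Q‖ < 1) (x : ℂ) (N : ℕ) :
    ∑' n : ℕ, eulA Q n * x ^ n
      = (∏ k ∈ Finset.range N, (1 + x * Q ^ k)) * ∑' n : ℕ, eulA Q n * (Q ^ N * x) ^ n := by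
  induction N with
  | zero => simp
  | succ N ih =>
    rw [ih, S_func hQ (Q ^ N * x), Finset.prod_range_succ]
    have h : Q * (Q ^ N * x) = Q ^ (N + 1) * x := by ring
    rw [h]
    ring

lemma S_sub_one_bound {Q : ℂ} (hQ : ‖Q‖ < 1) (x : ℂ) {t : ℝ} (ht : 0 ≤ t) (ht1 : t ≤ 1)
    {y : ℂ} (hy : ‖y‖ ≤ t * ‖x‖) :
    ‖(∑' n : ℕ, eulA Q n * y ^ n) - 1‖
      ≤ (∑' n : ℕ, ‖eulA Q (n + 1)‖ * ‖x‖ ^ (n + 1)) * t := by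
  have hsy := summable_eulA hQ y
  have hny : Summable (fun n : ℕ => ‖eulA Q (n+1) * y ^ (n+1)‖) := by
    refine ((summable_nat_add_iff 1).2 (summable_norm_eulA hQ y)).congr fun n => ?_
    rw [norm_mul, norm_pow]
  have hnx : Summable (fun n : ℕ => ‖eulA Q (n+1)‖ * ‖x‖ ^ (n+1) * t) :=
    ((summable_nat_add_iff 1).2 (summable_norm_eulA hQ x)).mul_right t
  have e0 : eulA Q 0 * y ^ 0 = 1 := by rw [eulA_zero]; simp
  rw [Summable.tsum_eq_zero_add hsy, e0, add_sub_cancel_left]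
  calc ‖∑' n : ℕ, eulA Q (n+1) * y ^ (n+1)‖
      ≤ ∑' n : ℕ, ‖eulA Q (n+1) * y ^ (n+1)‖ := norm_tsum_le_tsum_norm hny
    _ ≤ ∑' n : ℕ, ‖eulA Q (n+1)‖ * ‖x‖ ^ (n+1) * t := by
        refine Summable.tsum_le_tsum (fun n => ?_) hny hnx
        rw [norm_mul, norm_pow]
        have h1 : ‖y‖ ^ (n+1) ≤ (t * ‖x‖) ^ (n+1) :=
          pow_le_pow_left₀ (norm_nonneg _) hy (n+1)
        have h2 : t ^ (n+1) ≤ t := by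
          calc t ^ (n+1) ≤ t ^ 1 := pow_le_pow_of_le_one ht ht1 (by omega)
            _ = t := pow_one t
        calc ‖eulA Q (n+1)‖ * ‖y‖ ^ (n+1)
            ≤ ‖eulA Q (n+1)‖ * ((t * ‖x‖) ^ (n+1)) :=
              mul_le_mul_of_nonneg_left h1 (norm_nonneg _)
          _ = ‖eulA Q (n+1)‖ * ‖x‖ ^ (n+1) * t ^ (n+1) := by rw [mul_pow]; ring
          _ ≤ ‖eulA Q (n+1)‖ * ‖x‖ ^ (n+1) * t := by
              apply mul_le_mul_of_nonneg_left h2 (by positivity)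
    _ = (∑' n : ℕ, ‖eulA Q (n+1)‖ * ‖x‖ ^ (n+1)) * t := tsum_mul_right

lemma euler {Q x : ℂ} (hQ : ‖Q‖ < 1) (hx : ‖x‖ < 1) :
    ∑' n : ℕ, eulA Q n * x ^ n = ∏' k : ℕ, (1 + x * Q ^ k) := by
  have hp := (key hx hQ).1
  have hlim1 := hp.tendsto_prod_nat
  set M := ∑' n : ℕ, ‖eulA Q (n + 1)‖ * ‖x‖ ^ (n + 1) with hM
  have hlim2 : Filter.Tendsto (fun N : ℕ => ∑' n : ℕ, eulA Q n * (Q ^ N * x) ^ n)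
      atTop (𝓝 1) := by
    rw [tendsto_iff_norm_sub_tendsto_zero]
    apply squeeze_zero (fun N => norm_nonneg _) (g := fun N => M * ‖Q‖ ^ N)
    · intro N
      have hy : ‖Q ^ N * x‖ ≤ ‖Q‖ ^ N * ‖x‖ := by rw [norm_mul, norm_pow]
      exact S_sub_one_bound hQ x (by positivity)
        (pow_le_one₀ (norm_nonneg _) hQ.le) hy
    · have := (tendsto_pow_atTop_nhds_zero_of_lt_one (norm_nonneg Q) hQ).const_mul M
      simpa using this
  have hconst : Filter.Tendsto
      (fun N : ℕ => (∏ k ∈ Finset.range N, (1 + x * Q ^ k))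
        * ∑' n : ℕ, eulA Q n * (Q ^ N * x) ^ n) atTop
      (𝓝 ((∏' k : ℕ, (1 + x * Q ^ k)) * 1)) := hlim1.mul hlim2
  have hc2 : Filter.Tendsto
      (fun _ : ℕ => ∑' n : ℕ, eulA Q n * x ^ n) atTop
      (𝓝 ((∏' k : ℕ, (1 + x * Q ^ k)) * 1)) := by
    refine hconst.congr fun N => ?_
    exact (S_iter hQ x N).symm
  have := tendsto_nhds_unique hc2 tendsto_const_nhds
  rw [← this, mul_one]

lemma choose_sq (n : ℕ) : 2 * n.choose 2 + n = n ^ 2 := by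
  induction n with
  | zero => simp
  | succ n ih =>
    have h : (n + 1).choose 2 = n + n.choose 2 := by
      rw [Nat.choose_succ_succ, Nat.choose_one_right]
    have h2 : (n + 1) ^ 2 = n ^ 2 + 2 * n + 1 := by ring
    rw [h, h2, ← ih]
    ring

/-- Identity (32): for `|q| < 1`,
`Σ_{n≥0} q^{n^2} / (q^2;q^2)_n = (q^2;q^4)_∞^2 (q^4;q^4)_∞ / (q;q)_∞`. -/
theorem rr_32 (q : ℂ) (hq : ‖q‖ < 1) :
    ∑' n : ℕ, q ^ (n ^ 2) / qPoch (q ^ 2) (q ^ 2) n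
      = qPochInf (q ^ 2) (q ^ 4) ^ 2 * qPochInf (q ^ 4) (q ^ 4) / qPochInf q q := by
  have hq2 : ‖q ^ 2‖ < 1 := by
    rw [norm_pow]; exact pow_lt_one₀ (norm_nonneg _) hq (by norm_num)
  have hL : ∑' n : ℕ, q ^ (n ^ 2) / qPoch (q ^ 2) (q ^ 2) n
      = ∑' n : ℕ, eulA (q ^ 2) n * q ^ n := by
    refine tsum_congr fun n => ?_
    rw [eulA, div_mul_eq_mul_div]
    congr 1
    rw [← pow_mul, ← pow_add]
    congr 1
    rw [← choose_sq n]
  have hD : qPochInf q q ≠ 0 := (key' hq hq).2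
  rw [hL, euler hq2 hq, eq_div_iff hD]
  exact prod_side hq
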